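/- Let G = (V, E) be a graph with vertex set V = {1,...,d} and maximal cliques C_1, ..., C_t. Suppose f : R^d → R is given by f(x) = (x−μ)^T K (x−μ) for a symmetric positive semidefinite matrix K and μ ∈ R^d, and suppose f(x) = Σ_{i=1}^t g_i(x_{C_i}) for some functions g_i : R^{C_i} → R (each g_i depends only on the coordinates in C_i). Then for all ℓ, m ∈ V with ℓ ≠ m and {ℓ, m} ∉ E, the entry K_{ℓm} equals 0. -/

import Mathlib

/-- if a PSD quadratic form `(x-μ)ᵀ K (x-μ)` decomposes as a sum of
functions, one for each maximal clique of a graph `G` and depending only on the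
coordinates of that clique, then `K_{ℓm} = 0` for every non-adjacent pair `ℓ ≠ m`. -/
theorem quadratic_clique_decomposition_offdiag_zero {d t : ℕ}
    (G : SimpleGraph (Fin d)) (C : Fin t → Finset (Fin d))
    (hclique : ∀ i, G.IsClique (C i : Set (Fin d)))
    (hmaximal : ∀ i, ∀ s : Finset (Fin d), G.IsClique (s : Set (Fin d)) → C i ⊆ s → s = C i)
    (hall : ∀ s : Finset (Fin d), G.IsClique (s : Set (Fin d)) →
      (∀ s' : Finset (Fin d), G.IsClique (s' : Set (Fin d)) → s ⊆ s' → s' = s) →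
      ∃ i, C i = s)
    (K : Matrix (Fin d) (Fin d) ℝ) (hK : K.PosSemidef) (μ : Fin d → ℝ)
    (g : Fin t → (Fin d → ℝ) → ℝ)
    (hdep : ∀ i (x y : Fin d → ℝ), (∀ v ∈ C i, x v = y v) → g i x = g i y)
    (hsum : ∀ x : Fin d → ℝ,
      dotProduct (x - μ) (K.mulVec (x - μ)) = ∑ i, g i x) :
    ∀ ℓ m : Fin d, ℓ ≠ m → ¬ G.Adj ℓ m → K ℓ m = 0 := by
  intro ℓ m hne hadj
  -- symmetry of K
  have hsymm : K m ℓ = K ℓ m := by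
    have h := hK.1
    rw [Matrix.IsHermitian] at h
    calc K m ℓ = K.transpose ℓ m := rfl
    _ = K ℓ m := by rw [show K.transpose = K from h]
  -- no clique contains both ℓ and m
  have hnot : ∀ i, ℓ ∉ C i ∨ m ∉ C i := by
    intro i
    by_contra h
    push_neg at h
    exact hadj (hclique i h.1 h.2 hne)
  set u : Fin d → ℝ := Pi.single ℓ 1 with hu
  set v : Fin d → ℝ := Pi.single m 1 with hv
  have key : ∀ w : Fin d → ℝ,
      dotProduct ((μ + w) - μ) (K.mulVec ((μ + w) - μ))
        = dotProduct w (K.mulVec w) := by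
    intro w
    congr 1 <;> simp
  -- the four quadratic values
  have q1 : dotProduct ((μ + (u + v)) - μ) (K.mulVec ((μ + (u + v)) - μ))
      = K ℓ ℓ + K ℓ m + K m ℓ + K m m := by
    rw [key]
    simp [hu, hv, add_dotProduct, Matrix.mulVec_add, dotProduct_add,
      Matrix.mulVec_single, single_dotProduct]
    ring
  have q2 : dotProduct ((μ + u) - μ) (K.mulVec ((μ + u) - μ)) = K ℓ ℓ := by
    rw [key]; simp [hu, Matrix.mulVec_single, single_dotProduct]
  have q3 : dotProduct ((μ + v) - μ) (K.mulVec ((μ + v) - μ)) = K m m := by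
    rw [key]; simp [hv, Matrix.mulVec_single, single_dotProduct]
  have q4 : dotProduct (μ - μ) (K.mulVec (μ - μ)) = 0 := by simp
  -- each g_i cancels in the mixed difference
  have gcancel : ∀ i, g i (μ + (u + v)) - g i (μ + u) - g i (μ + v) + g i μ = 0 := by
    intro i
    rcases hnot i with hℓ | hm
    · have e1 : g i (μ + (u + v)) = g i (μ + v) := by
        apply hdep
        intro w hw
        have : w ≠ ℓ := by rintro rfl; exact hℓ hw
        simp [hu, Pi.single_apply, this]
      have e2 : g i (μ + u) = g i μ := by
        apply hdep
        intro w hw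
        have : w ≠ ℓ := by rintro rfl; exact hℓ hw
        simp [hu, Pi.single_apply, this]
      rw [e1, e2]; ring
    · have e1 : g i (μ + (u + v)) = g i (μ + u) := by
        apply hdep
        intro w hw
        have : w ≠ m := by rintro rfl; exact hm hw
        simp [hv, Pi.single_apply, this]
      have e2 : g i (μ + v) = g i μ := by
        apply hdep
        intro w hw
        have : w ≠ m := by rintro rfl; exact hm hw
        simp [hv, Pi.single_apply, this]
      rw [e1, e2]; ring
  have s1 := hsum (μ + (u + v)); rw [q1] at s1
  have s2 := hsum (μ + u); rw [q2] at s2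
  have s3 := hsum (μ + v); rw [q3] at s3
  have s4 := hsum μ; rw [q4] at s4
  have hS : ∑ i, (g i (μ + (u + v)) - g i (μ + u) - g i (μ + v) + g i μ) = 0 :=
    Finset.sum_eq_zero fun i _ => gcancel i
  rw [Finset.sum_add_distrib, Finset.sum_sub_distrib, Finset.sum_sub_distrib,
    ← s1, ← s2, ← s3, ← s4] at hS
  rw [hsymm] at hS
  linarith
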